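/- Let e ≥ 2 be an integer and let ζ = exp(2πi/2^e) ∈ ℂ. Then every subfield F of K = ℚ(ζ − ζ⁻¹) with F ≠ K is totally real, i.e., every embedding of F into ℂ has image contained in ℝ. -/

import Mathlib

open IntermediateField

set_option synthInstance.maxHeartbeats 1000000
set_option maxHeartbeats 4000000

lemma aux_sq_classify (e : ℕ) (he : 2 ≤ e) (y : ZMod (2^e)) (hy : y * y = 1) :
    y = 1 ∨ y = -1 ∨ y = 2^(e-1) - 1 ∨ y = 2^(e-1) + 1 := by
  haveI : NeZero (2^e) := ⟨(Nat.pow_pos (n := e) (by norm_num)).ne'⟩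
  have he1 : e - 1 + 1 = e := by omega
  have he2 : e - 2 + 2 = e := by omega
  have h2e : (2 : ZMod (2^e))^e = 0 := by
    have := ZMod.natCast_self (2^e); push_cast at this; exact this
  have hpp : (2 : ZMod (2^e))^(e-1) * 2 = 0 := by rw [← pow_succ, he1, h2e]
  set a : ℤ := (y.val : ℤ) with ha
  have hcast : ((a : ℤ) : ZMod (2^e)) = y := by
    rw [ha]; push_cast; rw [ZMod.natCast_val, ZMod.cast_id]
  have hdvd : (2:ℤ)^e ∣ a * a - 1 := by
    have h0 : ((a * a - 1 : ℤ) : ZMod (2^e)) = 0 := by push_cast [hcast, hy]; ring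
    have := (ZMod.intCast_zmod_eq_zero_iff_dvd _ _).mp h0
    push_cast at this; exact this
  rcases Int.even_or_odd a with hev | hodd
  · exfalso
    obtain ⟨b, hb⟩ := hev
    obtain ⟨c, hc⟩ := dvd_trans (pow_dvd_pow 2 he) hdvd
    have h5 : 4 * (b*b) - 1 = 4 * c := by
      have : a * a = 4 * (b * b) := by rw [hb]; ring
      rw [← this, hc]; ring
    set B := b * b; omega
  obtain ⟨b, hb⟩ := hodd
  have key : (2:ℤ)^(e-2) ∣ b ∨ (2:ℤ)^(e-2) ∣ (b+1) := by
    have h2 : (2:ℤ)^(e-2) * 4 = 2^e := by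
      rw [show (4:ℤ) = 2^2 by norm_num, ← pow_add, he2]
    have h4 : (4:ℤ) * 2^(e-2) ∣ 4 * (b * (b+1)) := by
      have h1 : a * a - 1 = 4 * (b * (b+1)) := by rw [hb]; ring
      rw [← h1, mul_comm (4:ℤ), h2]; exact hdvd
    have hbb : (2:ℤ)^(e-2) ∣ b * (b+1) := (mul_dvd_mul_iff_left (by norm_num : (4:ℤ) ≠ 0)).mp h4
    rcases Int.even_or_odd b with hbe | hbo
    · left
      have hcop : IsCoprime ((2:ℤ)^(e-2)) (b+1) := by
        apply IsCoprime.pow_left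
        rw [Int.prime_two.coprime_iff_not_dvd]
        intro h2b
        obtain ⟨c, hc⟩ := hbe
        obtain ⟨d, hd⟩ := h2b
        omega
      exact hcop.dvd_of_dvd_mul_left (by rwa [mul_comm] at hbb)
    · right
      have hcop : IsCoprime ((2:ℤ)^(e-2)) b := by
        apply IsCoprime.pow_left
        rw [Int.prime_two.coprime_iff_not_dvd]
        intro h2b
        obtain ⟨c, hc⟩ := hbo
        obtain ⟨d, hd⟩ := h2b
        omega
      exact hcop.dvd_of_dvd_mul_left hbb
  have hcast2 : ∀ t : ℤ, (((2:ℤ)^(e-1) * t : ℤ) : ZMod (2^e)) = (2 : ZMod (2^e))^(e-1) * (t : ZMod (2^e)) := by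
    intro t; push_cast; ring
  rcases key with ⟨t, ht⟩ | ⟨t, ht⟩
  · -- a = 2^(e-1) t + 1
    have hay : a = 2^(e-1) * t + 1 := by
      rw [hb, ht, show (2:ℤ)^(e-1) = 2 * 2^(e-2) by rw [← pow_succ']; congr 1; omega]
      ring
    rcases Int.even_or_odd t with ⟨u, hu⟩ | ⟨u, hu⟩
    · left
      rw [← hcast, hay, hu]
      push_cast
      rw [show ((2:ZMod (2^e))^(e-1) * (u + u) + 1 : ZMod (2^e)) = (2^(e-1)*2) * u + 1 by ring, hpp]
      ring
    · right; right; right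
      rw [← hcast, hay, hu]
      push_cast
      rw [show ((2:ZMod (2^e))^(e-1) * (2*u + 1) + 1 : ZMod (2^e)) = (2^(e-1)*2) * u + (2^(e-1) + 1) by ring, hpp]
      ring
  · -- a = 2^(e-1) t - 1
    have hay : a = 2^(e-1) * t - 1 := by
      rw [hb, show b = 2^(e-2) * t - 1 by omega,
        show (2:ℤ)^(e-1) = 2 * 2^(e-2) by rw [← pow_succ']; congr 1; omega]
      ring
    rcases Int.even_or_odd t with ⟨u, hu⟩ | ⟨u, hu⟩
    · right; left
      rw [← hcast, hay, hu]
      push_cast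
      rw [show ((2:ZMod (2^e))^(e-1) * (u + u) - 1 : ZMod (2^e)) = (2^(e-1)*2) * u - 1 by ring, hpp]
      ring
    · right; right; left
      rw [← hcast, hay, hu]
      push_cast
      rw [show ((2:ZMod (2^e))^(e-1) * (2*u + 1) - 1 : ZMod (2^e)) = (2^(e-1)*2) * u + (2^(e-1) - 1) by ring, hpp]
      ring

lemma aux_unit8 : ∀ u : (ZMod 8)ˣ, (u : ZMod 8) * (u : ZMod 8) = 1 := by decide

lemma aux_group (e : ℕ) (he : 2 ≤ e) (H : Subgroup (ZMod (2^e))ˣ)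
    (wu : (ZMod (2^e))ˣ) (hwu : (wu : ZMod (2^e)) = 2^(e-1) - 1)
    (hwH : wu ∈ H) (x : (ZMod (2^e))ˣ) (hxH : x ∈ H) (hx1 : x ≠ 1) (hxw : x ≠ wu) :
    (-1 : (ZMod (2^e))ˣ) ∈ H := by
  haveI : NeZero (2^e) := ⟨(Nat.pow_pos (n := e) (by norm_num)).ne'⟩
  have he1 : e - 1 + 1 = e := by omega
  have h2e : (2 : ZMod (2^e))^e = 0 := by
    have := ZMod.natCast_self (2^e); push_cast at this; exact this
  have hpp : (2 : ZMod (2^e))^(e-1) * 2 = 0 := by rw [← pow_succ, he1, h2e]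
  -- order of x is a power of 2
  have hcard : Fintype.card (ZMod (2^e))ˣ = 2^(e-1) := by
    rw [ZMod.card_units_eq_totient, Nat.totient_prime_pow Nat.prime_two (by omega : 0 < e)]
    simp [he1]
  have hdvd : orderOf x ∣ 2^(e-1) := hcard ▸ orderOf_dvd_card
  obtain ⟨k, hk, hxk⟩ := (Nat.dvd_prime_pow Nat.prime_two).mp hdvd
  have hk1 : 1 ≤ k := by
    rcases Nat.eq_zero_or_pos k with rfl | h
    · exfalso; exact hx1 (orderOf_eq_one_iff.mp (by rw [hxk]; norm_num))
    · exact h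
  set y := x ^ (2^(k-1)) with hy
  have hyH : y ∈ H := pow_mem hxH _
  have hysq : y * y = 1 := by
    rw [hy, ← pow_add, ← two_mul, ← pow_succ', show k - 1 + 1 = k by omega, ← hxk,
      pow_orderOf_eq_one]
  have hy1 : y ≠ 1 := by
    intro h
    have := orderOf_dvd_of_pow_eq_one h
    rw [hxk] at this
    have := Nat.le_of_dvd (by positivity) this
    have : (2:ℕ)^k ≤ 2^(k-1) := this
    have := (pow_lt_pow_iff_right₀ (a := 2) (by norm_num)).mpr (show k - 1 < k by omega)
    omega
  have hyval : (y : ZMod (2^e)) * (y : ZMod (2^e)) = 1 := by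
    rw [← Units.val_mul, hysq, Units.val_one]
  rcases aux_sq_classify e he _ hyval with h | h | h | h
  · exact absurd (Units.ext h) hy1
  · have : y = -1 := Units.ext (by rw [h]; simp)
    rwa [← this]
  · -- y = wu : impossible
    exfalso
    have hywu : y = wu := Units.ext (by rw [h, hwu])
    rcases Nat.lt_or_ge k 2 with hk2 | hk2
    · -- k = 1, so y = x
      have : k = 1 := by omega
      apply hxw
      rw [← hywu, hy, this]; simp
    · -- z := x^(2^(k-2)) squares to wu; but squares are 1 mod 8
      rcases Nat.lt_or_ge e 3 with he3 | he3
      · -- e = 2 : wu = 1, contradiction with hy1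
        have : e = 2 := by omega
        subst this
        apply hy1
        apply Units.ext
        rw [h]; norm_num
      · set z := x ^ (2^(k-2)) with hz
        have hzsq : z * z = y := by
          rw [hz, hy, ← pow_add, ← two_mul, ← pow_succ', show k - 2 + 1 = k - 1 by omega]
        -- map to ZMod 8
        have h8 : (8:ℕ) ∣ 2^e := by
          have : (8:ℕ) = 2^3 := by norm_num
          rw [this]; exact pow_dvd_pow 2 he3
        set φ := Units.map (ZMod.castHom h8 (ZMod 8)).toMonoidHom with hφ
        have h2 : (ZMod.castHom h8 (ZMod 8)) ((y : ZMod (2^e))) = 1 := by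
          rw [← hzsq, Units.val_mul, map_mul]
          have hcz : (φ z : ZMod 8) = ZMod.castHom h8 (ZMod 8) (z : ZMod (2^e)) := rfl
          rw [← hcz]; exact aux_unit8 (φ z)
        rw [h, map_sub, map_pow, map_one, map_ofNat] at h2
        rcases Nat.lt_or_ge e 4 with he4 | he4
        · have : e = 3 := by omega
          subst this
          norm_num at h2
          exact absurd h2 (by decide)
        · have : (2 : ZMod 8)^(e-1) = 0 := by
            rw [show e - 1 = 3 + (e - 4) by omega, pow_add,
              show (2:ZMod 8)^3 = 0 by decide, zero_mul]
          rw [this] at h2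
          exact absurd h2 (by decide)
  · -- y = 2^(e-1)+1 : then wu * y = -1
    have : wu * y = -1 := by
      apply Units.ext
      rw [Units.val_mul, hwu, h]
      have : ((2:ZMod (2^e))^(e-1) - 1) * (2^(e-1) + 1) = 2^(e-1) * 2^(e-1) - 1 := by ring
      rw [this, ← pow_add, show e - 1 + (e-1) = e + (e - 2) by omega, pow_add, h2e]
      simp
    rw [← this]
    exact mul_mem hwH hyH

/-- `zetaC d` is the primitive `d`-th root of unity `exp(2πi/d)` in `ℂ`. -/
noncomputable def zetaC (d : ℕ) : ℂ := Complex.exp (2 * Real.pi * Complex.I / d)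

/-- For `e ≥ 2` and `K = ℚ(ζ - ζ⁻¹)` with `ζ = exp(2πi/2^e)`, every proper subfield
of `K` is totally real: each of its embeddings into `ℂ` lands in `ℝ`. -/
theorem stmt6 (e : ℕ) (he : 2 ≤ e) (K : IntermediateField ℚ ℂ)
    (hK : K = ℚ⟮zetaC (2 ^ e) - (zetaC (2 ^ e))⁻¹⟯) :
    ∀ F : Subfield K, F ≠ ⊤ → ∀ σ : F →+* ℂ, ∀ x : F, (σ x).im = 0 := by
  intro F hF σ x
  have hm0 : (2:ℕ)^e ≠ 0 := (Nat.pow_pos (n := e) (by norm_num)).ne'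
  haveI : NeZero ((2:ℕ)^e) := ⟨hm0⟩
  set N : ℕ+ := ⟨2^e, Nat.pos_of_ne_zero hm0⟩ with hN
  have hNval : (N : ℕ) = 2^e := rfl
  have hζc : IsPrimitiveRoot (zetaC (2^e)) (2^e) := Complex.isPrimitiveRoot_exp _ hm0
  set L : IntermediateField ℚ ℂ := ℚ⟮zetaC (2^e)⟯ with hLdef
  set ζ : L := AdjoinSimple.gen ℚ (zetaC (2^e)) with hζdef
  have hζcoe : (ζ : ℂ) = zetaC (2^e) := rfl
  have hζ : IsPrimitiveRoot ζ ((N:ℕ)) := by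
    rw [hNval]
    exact IsPrimitiveRoot.coe_submonoidClass_iff.mp (by rw [hζcoe]; exact hζc)
  haveI hcyc : IsCyclotomicExtension {(N:ℕ)} ℚ L := by
    have H := IntermediateField.adjoin_simple_toSubalgebra_of_isAlgebraic
      (show IsIntegral ℚ (zetaC (2^e)) from ?_).isAlgebraic
    · refine IsCyclotomicExtension.equiv _ _ _ (h := ?_) (.refl : L.toSubalgebra ≃ₐ[ℚ] _)
      rw [H]
      exact IsPrimitiveRoot.adjoin_isCyclotomicExtension ℚ
        (show IsPrimitiveRoot (zetaC (2^e)) ((N:ℕ)) by rw [hNval]; exact hζc)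
    · refine ⟨Polynomial.X^(2^e) - Polynomial.C 1, ?_, ?_⟩
      · exact Polynomial.monic_X_pow_sub_C _ hm0
      · simp only [Polynomial.eval₂_sub, Polynomial.eval₂_X_pow, Polynomial.eval₂_C,
          Polynomial.aeval_def] at *
        rw [hζc.pow_eq_one]; simp
  haveI : IsGalois ℚ L := IsCyclotomicExtension.isGalois {(N:ℕ)} ℚ L
  haveI : FiniteDimensional ℚ L := IsCyclotomicExtension.finiteDimensional {(N:ℕ)} ℚ L
  -- the monoid hom to units of ZMod
  set μ : (L ≃ₐ[ℚ] L) →* (ZMod (2^e))ˣ := hζ.autToPow ℚ with hμdef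
  have μinj : Function.Injective μ := hζ.autToPow_injective ℚ
  have μspec : ∀ g : L ≃ₐ[ℚ] L, ζ ^ ((μ g : ZMod (2^e))).val = g ζ :=
    fun g => hζ.autToPow_spec ℚ g
  have μsurj : Function.Surjective μ := by
    have hcard : Fintype.card (L ≃ₐ[ℚ] L) = Fintype.card (ZMod (2^e))ˣ :=
      Fintype.card_congr (IsCyclotomicExtension.autEquivPow L
        (Polynomial.cyclotomic.irreducible_rat (show 0 < ((N:ℕ)) from Nat.pos_of_ne_zero hm0))).toEquiv
    exact ((Fintype.bijective_iff_injective_and_card μ).mpr ⟨μinj, hcard⟩).2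
  -- η and K'
  set η : L := ζ - ζ⁻¹ with hηdef
  have hηcoe : (η : ℂ) = zetaC (2^e) - (zetaC (2^e))⁻¹ := by
    rw [hηdef]
    push_cast
    rfl
  set K' : IntermediateField ℚ L := ℚ⟮η⟯ with hK'def
  have hKmap : K'.map L.val = K := by
    rw [hK'def]
    exact (adjoin_map ℚ {η} L.val).trans (by rw [Set.image_singleton, hK]; congr 1)
  -- the subfield S of ℂ and intermediate field E of L corresponding to F
  set S : Subfield ℂ := F.map K.val.toRingHom with hSdef
  have hSK : ∀ c ∈ S, c ∈ K := by
    rintro c ⟨y, hy, rfl⟩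
    exact y.2
  set E : IntermediateField ℚ L := Subfield.toIntermediateField (S.comap L.val.toRingHom)
      (fun q => by
        simp only [Subfield.mem_comap]
        have h1 : L.val.toRingHom (algebraMap ℚ L q) = algebraMap ℚ ℂ q := L.val.commutes q
        rw [h1, eq_ratCast (algebraMap ℚ ℂ) q]
        exact SubfieldClass.ratCast_mem S q) with hEdef
  have hmemE : ∀ z : L, z ∈ E ↔ (z : ℂ) ∈ S := fun z => Iff.rfl
  have hEK' : E ≤ K' := by
    intro z hz
    have hzK : (z : ℂ) ∈ K'.map L.val := by rw [hKmap]; exact hSK _ ((hmemE z).mp hz)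
    obtain ⟨y, hy, hyz⟩ := hzK
    have : y = z := Subtype.ext hyz
    rwa [← this]
  have hEne : E ≠ K' := by
    intro hEq
    apply hF
    apply Subfield.ext; intro z; simp only [Subfield.mem_top, iff_true]
    have hz : (z : ℂ) ∈ K'.map L.val := by rw [hKmap]; exact z.2
    obtain ⟨y, hy, hyz⟩ := hz
    have hyE : y ∈ E := by rw [hEq]; exact hy
    obtain ⟨u, hu, huy⟩ := (hmemE y).mp hyE
    have : u = z := Subtype.ext (huy.trans hyz)
    rwa [← this]
  -- pointwise fixing from fixing a generator
  have memfix : ∀ (g : L ≃ₐ[ℚ] L) (β : L), g β = β →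
      ∀ z ∈ (ℚ⟮β⟯ : IntermediateField ℚ L), g z = z := by
    intro g β hβ
    have hstab : Subgroup.zpowers g ≤ MulAction.stabilizer (L ≃ₐ[ℚ] L) β :=
      Subgroup.zpowers_le.mpr hβ
    have hle : (ℚ⟮β⟯ : IntermediateField ℚ L) ≤ fixedField (Subgroup.zpowers g) := by
      rw [adjoin_simple_le_iff]
      exact fun gh => hstab gh.2
    have := (IntermediateField.le_iff_le _ _).mp hle (Subgroup.mem_zpowers g)
    exact (IntermediateField.mem_fixingSubgroup_iff _ _).mp this
  -- arithmetic in ZMod (2^e)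
  have he1 : e - 1 + 1 = e := by omega
  have h2eZ : (2 : ZMod (2^e))^e = 0 := by
    have := ZMod.natCast_self (2^e); push_cast at this; exact this
  have hone_le : (1:ℕ) ≤ 2^(e-1) := Nat.one_le_two_pow
  have hlt : (2:ℕ)^(e-1) < 2^e := Nat.pow_lt_pow_right one_lt_two (by omega)
  set wn : ℕ := 2^(e-1) - 1 with hwndef
  have hwn_lt : wn < 2^e := by omega
  have hwcast : ((wn : ℕ) : ZMod (2^e)) = 2^(e-1) - 1 := by
    rw [hwndef]; push_cast [Nat.cast_sub hone_le]; ring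
  have hwsq : ((wn : ZMod (2^e))) * ((wn : ZMod (2^e))) = 1 := by
    rw [hwcast]
    have h1 : ((2:ZMod (2^e))^(e-1) - 1) * ((2:ZMod (2^e))^(e-1) - 1)
        = 2^(e-1)*2^(e-1) - (2^(e-1)*2) + 1 := by ring
    have h2 : (2:ZMod (2^e))^(e-1)*2^(e-1) = 0 := by
      rw [← pow_add, show e - 1 + (e-1) = e + (e - 2) by omega, pow_add, h2eZ, zero_mul]
    have h3 : (2:ZMod (2^e))^(e-1)*2 = 0 := by rw [← pow_succ, he1, h2eZ]
    rw [h1, h2, h3]; ring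
  set wu : (ZMod (2^e))ˣ := ⟨(wn : ZMod (2^e)), (wn : ZMod (2^e)), hwsq, hwsq⟩ with hwudef
  obtain ⟨s, hs⟩ := μsurj wu
  -- ζ ^ (2^(e-1)) = -1
  have hζnz : (ζ:L) ≠ 0 := hζ.ne_zero (by rw [hNval]; exact hm0)
  have hζpow : ζ ^ ((2:ℕ)^e) = 1 := by
    have := hζ.pow_eq_one; rwa [hNval] at this
  have hζhalf : ζ ^ ((2:ℕ)^(e-1)) = -1 := by
    have hsq' : ζ ^ ((2:ℕ)^(e-1)) * ζ ^ ((2:ℕ)^(e-1)) = 1 := by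
      rw [← pow_add, show (2:ℕ)^(e-1) + 2^(e-1) = 2^e by
        rw [← two_mul, ← pow_succ', he1]]
      exact hζpow
    rcases mul_self_eq_one_iff.mp hsq' with h | h
    · exfalso
      have hdvd := (hζ.pow_eq_one_iff_dvd _).mp h
      rw [hNval] at hdvd
      have := Nat.le_of_dvd (by positivity) hdvd
      omega
    · exact h
  -- s fixes η
  have hsζ : s ζ = ζ ^ wn := by
    rw [← μspec s, hs]
    congr 1
    exact ZMod.val_cast_of_lt hwn_lt
  have hwnpow : ζ ^ wn = -ζ⁻¹ := by
    have h1 : ζ ^ wn * ζ = ζ ^ ((2:ℕ)^(e-1)) := by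
      rw [← pow_succ, hwndef, Nat.sub_add_cancel hone_le]
    rw [hζhalf] at h1
    rw [show -ζ⁻¹ = -1/ζ by field_simp]
    rw [eq_div_iff hζnz]
    exact h1
  have hsη : s η = η := by
    rw [hηdef, map_sub, map_inv₀, hsζ, hwnpow]
    rw [inv_neg, inv_inv]
    ring
  have hsK' : ∀ z ∈ K', s z = z := memfix s η hsη
  have hsHH : s ∈ E.fixingSubgroup :=
    (IntermediateField.mem_fixingSubgroup_iff _ _).mpr (fun z hz => hsK' z (hEK' hz))
  have hneq : E.fixingSubgroup ≠ K'.fixingSubgroup := by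
    intro hEqq
    apply hEne
    calc E = fixedField E.fixingSubgroup := (IsGalois.fixedField_fixingSubgroup E).symm
    _ = fixedField K'.fixingSubgroup := by rw [hEqq]
    _ = K' := IsGalois.fixedField_fixingSubgroup K'
  have hsub : K'.fixingSubgroup ≤ E.fixingSubgroup := by
    intro g hg
    rw [IntermediateField.mem_fixingSubgroup_iff] at hg ⊢
    exact fun z hz => hg z (hEK' hz)
  obtain ⟨g0, hg0H, hg0n⟩ : ∃ g, g ∈ E.fixingSubgroup ∧ g ∉ K'.fixingSubgroup := by
    by_contra hcon
    push_neg at hcon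
    exact hneq (le_antisymm hcon hsub)
  have hg0_ne1 : μ g0 ≠ 1 := by
    intro h
    apply hg0n
    have hg01 : g0 = 1 := μinj (by rw [h, map_one])
    rw [hg01]
    exact (IntermediateField.mem_fixingSubgroup_iff _ _).mpr (fun z hz => rfl)
  have hg0_new : μ g0 ≠ wu := by
    intro h
    apply hg0n
    have hg0s : g0 = s := μinj (by rw [h, hs])
    rw [hg0s]
    exact (IntermediateField.mem_fixingSubgroup_iff _ _).mpr hsK'
  obtain ⟨gc, hgcH, hgc⟩ : (-1 : (ZMod (2^e))ˣ) ∈ (E.fixingSubgroup).map μ :=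
    aux_group e he ((E.fixingSubgroup).map μ) wu hwcast
      ⟨s, hsHH, hs⟩ (μ g0) ⟨g0, hg0H, rfl⟩ hg0_ne1 hg0_new
  -- homomorphism extensionality on L
  have homext : ∀ f h : (↥L →ₐ[ℚ] ℂ), f ζ = h ζ → f = h := by
    intro f h hfh
    apply (hζ.powerBasis ℚ).algHom_ext
    rwa [hζ.powerBasis_gen ℚ]
  -- gc sends ζ to ζ⁻¹
  have hgcζ : gc ζ = ζ⁻¹ := by
    have hval : ((μ gc : ZMod (2^e))).val = 2^e - 1 := by
      rw [hgc]
      have h1 : ((2^e - 1 : ℕ) : ZMod (2^e)) = -1 := by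
        rw [Nat.cast_sub (Nat.one_le_two_pow : (1:ℕ) ≤ 2^e), Nat.cast_one,
          ZMod.natCast_self (2^e)]
        ring
      have h2 : ((-1 : (ZMod (2^e))ˣ) : ZMod (2^e)) = ((2^e - 1:ℕ) : ZMod (2^e)) := by
        rw [h1, Units.val_neg, Units.val_one]
      rw [h2, ZMod.val_cast_of_lt (by omega)]
    have := μspec gc
    rw [hval] at this
    rw [← this]
    apply eq_inv_of_mul_eq_one_left
    rw [← pow_succ, Nat.sub_add_cancel (Nat.one_le_two_pow : (1:ℕ) ≤ 2^e)]
    exact hζpow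
  -- conj on ℂ restricted to L equals gc
  have hconjζc : (starRingEnd ℂ) (zetaC (2^e)) = (zetaC (2^e))⁻¹ := by
    unfold zetaC
    rw [← Complex.exp_conj, ← Complex.exp_neg]
    congr 1
    rw [map_div₀, map_mul, map_mul, Complex.conj_I, Complex.conj_ofReal, map_ofNat,
      map_natCast]
    ring
  set conjQ : ℂ →ₐ[ℚ] ℂ := (Complex.conjAe.restrictScalars ℚ).toAlgHom with hconjQdef
  have hconjQap : ∀ z : ℂ, conjQ z = (starRingEnd ℂ) z := fun z => rfl
  have hcomps : conjQ.comp L.val = L.val.comp gc.toAlgHom := by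
    apply homext
    show conjQ (L.val ζ) = L.val (gc ζ)
    rw [hgcζ, hconjQap, show L.val ζ = (ζ:ℂ) from rfl, hζcoe, hconjζc]
    rw [show L.val (ζ⁻¹) = ((ζ⁻¹ : ↥L) : ℂ) from rfl]
    push_cast
    rfl
  have hconjfix : ∀ z : ↥L, (starRingEnd ℂ) (z : ℂ) = ((gc z : ↥L) : ℂ) := by
    intro z
    have := DFunLike.congr_fun hcomps z
    erw [AlgHom.comp_apply, AlgHom.comp_apply, hconjQap] at this; exact this
  have hconjE : ∀ z : ↥L, z ∈ E → (starRingEnd ℂ) (z:ℂ) = (z:ℂ) := by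
    intro z hz
    rw [hconjfix z]
    have hzz : gc z = z := (IntermediateField.mem_fixingSubgroup_iff _ _).mp hgcH z hz
    rw [hzz]
  -- lift σ to an embedding of L, realize as Galois element
  have hzKmem : ∀ z : ↥E, ((z:↥L):ℂ) ∈ K := fun z => hSK _ ((hmemE z).mp z.2)
  have hzF : ∀ z : ↥E, (⟨((z:↥L):ℂ), hzKmem z⟩ : ↥K) ∈ F := by
    intro z
    obtain ⟨u, hu, huz⟩ := (hmemE z).mp z.2
    have hux : u = ⟨((z:↥L):ℂ), hzKmem z⟩ := Subtype.ext huz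
    rwa [← hux]
  set ι : ↥E →+* ↥F :=
    { toFun := fun z => ⟨⟨((z:↥L):ℂ), hzKmem z⟩, hzF z⟩
      map_one' := by apply Subtype.ext; apply Subtype.ext; push_cast; rfl
      map_mul' := fun a b => by apply Subtype.ext; apply Subtype.ext; push_cast; rfl
      map_zero' := by apply Subtype.ext; apply Subtype.ext; push_cast; rfl
      map_add' := fun a b => by apply Subtype.ext; apply Subtype.ext; push_cast; rfl }
    with hιdef
  set ψ : ↥E →+* ℂ := σ.comp ι with hψdef
  letI algE : Algebra ↥E ℂ := ψ.toAlgebra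
  letI algEL : Algebra ↥E ↥L := E.instAlgebraSubtypeMem
  haveI nz1 : @NoZeroSMulDivisors ↥E ℂ _ _ algE.toSMul :=
    @NoZeroSMulDivisors.mk ↥E ℂ _ _ algE.toSMul (fun {r m} h => by
      rw [@Algebra.smul_def _ _ _ _ algE, mul_eq_zero] at h
      exact h.imp (fun h' => (map_eq_zero_iff ψ ψ.injective).mp h') id)
  haveI nz2 : @NoZeroSMulDivisors ↥E ↥L _ _ algEL.toSMul :=
    inferInstance
  haveI fdEL : FiniteDimensional ↥E ↥L := FiniteDimensional.right ℚ ↥E ↥L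
  haveI algalg : Algebra.IsAlgebraic ↥E ↥L := Algebra.IsAlgebraic.of_finite _ _
  set υ : ↥L →ₐ[↥E] ℂ :=
    IsAlgClosed.lift (M := ℂ) (R := ↥E) (S := ↥L) with hυdef
  set υQ : ↥L →ₐ[ℚ] ℂ := υ.toRingHom.toRatAlgHom with hυQdef
  set g : ↥L ≃ₐ[ℚ] ↥L := υQ.restrictNormal' ↥L with hgdef
  have hg : ∀ z : ↥L, ((g z : ↥L) : ℂ) = υQ z := by
    intro z
    have := υQ.restrictNormal_commutes ↥L z
    exact this
  -- g maps E into E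
  have hcomm : ∀ a b : ↥L ≃ₐ[ℚ] ↥L, a * b = b * a := fun a b =>
    μinj (by rw [map_mul, map_mul, mul_comm])
  have hgE : ∀ z : ↥L, z ∈ E → g z ∈ E := by
    intro z hz
    have hfix : (E.map g.toAlgHom).fixingSubgroup = E.fixingSubgroup := by
      ext h
      simp only [IntermediateField.mem_fixingSubgroup_iff]
      constructor
      · intro hh y hy
        have h1 : h (g y) = g y := hh (g y) ⟨y, hy, rfl⟩
        have h2 : h (g y) = g (h y) := by
          calc h (g y) = (h * g) y := rfl
          _ = (g * h) y := by rw [hcomm h g]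
          _ = g (h y) := rfl
        rw [h2] at h1
        exact g.injective h1
      · rintro hh y ⟨w, hw, rfl⟩
        calc h (g w) = (h * g) w := rfl
        _ = (g * h) w := by rw [hcomm h g]
        _ = g (h w) := rfl
        _ = g w := by rw [hh w hw]
    have hEmap : E.map g.toAlgHom = E := by
      calc E.map g.toAlgHom
          = fixedField (E.map g.toAlgHom).fixingSubgroup :=
            (IsGalois.fixedField_fixingSubgroup _).symm
        _ = fixedField E.fixingSubgroup := by rw [hfix]
        _ = E := IsGalois.fixedField_fixingSubgroup E
    rw [← hEmap]
    exact ⟨z, hz, rfl⟩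
  -- finish
  obtain ⟨xL, hxLK', hxLeq⟩ : ∃ y ∈ K', L.val y = ((x : ↥K) : ℂ) := by
    have : ((x : ↥K) : ℂ) ∈ K'.map L.val := by rw [hKmap]; exact (x : ↥K).2
    exact this
  have hxLE : xL ∈ E := (hmemE xL).mpr (by
    rw [show ((xL:↥L):ℂ) = L.val xL from rfl, hxLeq]
    exact ⟨(x : ↥K), x.2, rfl⟩)
  have hσx : σ x = υQ xL := by
    have h1 : ι ⟨xL, hxLE⟩ = x := by
      apply Subtype.ext; apply Subtype.ext
      exact hxLeq
    have h3 : υ ((algebraMap ↥E ↥L) (⟨xL, hxLE⟩ : ↥E)) = ψ ⟨xL, hxLE⟩ := υ.commutes _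
    have h4 : (algebraMap ↥E ↥L) (⟨xL, hxLE⟩ : ↥E) = xL := rfl
    rw [h4] at h3
    have h5 : υQ xL = ψ ⟨xL, hxLE⟩ := h3
    rw [h5, hψdef, RingHom.comp_apply, h1]
  rw [← Complex.conj_eq_iff_im, hσx, ← hg xL]
  exact hconjE (g xL) (hgE xL hxLE)
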